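/- Let R, n be positive integers and let q_D ∈ [0,1). For each k ∈ {1,…,R} and ℓ ∈ {1,2}, let A_{ℓ,k} be an n×n real symmetric positive semidefinite matrix, let D_{ℓ,k} be an n×n real diagonal matrix, and let d⁰_{ℓ,k} > 0 be real constants satisfying (1−q_D)·d⁰_{ℓ,k}•I ≼ D_{ℓ,k} ≼ (1+q_D)·d⁰_{ℓ,k}•I. Define A := Σ_{k=1}^R ( A_{1,k}⊗D_{2,k} + D_{1,k}⊗A_{2,k} ) and A₂ := Σ_{k=1}^R ( d⁰_{2,k}•(A_{1,k}⊗I) + d⁰_{1,k}•(I⊗A_{2,k}) ). Then (1−q_D)•A₂ ≼ A ≼ (1+q_D)•A₂. (Lemma 3.1, estimate (3.7) for the preconditioner matrix A₂, case d = 2.) -/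

import Mathlib

open Matrix Kronecker

lemma psd_kron {n m : ℕ} {X : Matrix (Fin n) (Fin n) ℝ} {Y : Matrix (Fin m) (Fin m) ℝ}
    (hX : X.PosSemidef) (hY : Y.PosSemidef) : (X ⊗ₖ Y).PosSemidef := by
  obtain ⟨B, rfl⟩ := (by
    classical
    open scoped MatrixOrder in
    obtain ⟨B, hB⟩ := CStarAlgebra.nonneg_iff_eq_star_mul_self.mp hX.nonneg
    exact ⟨B, hB⟩ : ∃ B, X = Bᴴ * B)
  obtain ⟨C, rfl⟩ := (by
    classical
    open scoped MatrixOrder in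
    obtain ⟨C, hC⟩ := CStarAlgebra.nonneg_iff_eq_star_mul_self.mp hY.nonneg
    exact ⟨C, hC⟩ : ∃ C, Y = Cᴴ * C)
  rw [Matrix.mul_kronecker_mul]
  have : (Bᴴ ⊗ₖ Cᴴ) = (B ⊗ₖ C)ᴴ := by
    simp [Matrix.conjTranspose, ← Matrix.kroneckerMap_transpose]
    rfl
  rw [this]
  exact Matrix.posSemidef_conjTranspose_mul_self _

lemma kron_sub_right {n m : ℕ} (X : Matrix (Fin n) (Fin n) ℝ) (Y Z : Matrix (Fin m) (Fin m) ℝ) :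
    X ⊗ₖ (Y - Z) = X ⊗ₖ Y - X ⊗ₖ Z := by
  ext ⟨i, j⟩ ⟨k, l⟩
  simp [Matrix.kroneckerMap_apply, mul_sub]

lemma kron_sub_left {n m : ℕ} (X Y : Matrix (Fin n) (Fin n) ℝ) (Z : Matrix (Fin m) (Fin m) ℝ) :
    (X - Y) ⊗ₖ Z = X ⊗ₖ Z - Y ⊗ₖ Z := by
  ext ⟨i, j⟩ ⟨k, l⟩
  simp [Matrix.kroneckerMap_apply, sub_mul]

lemma psd_sum {m ι : Type*} [Fintype m] [Fintype ι] (f : ι → Matrix m m ℝ)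
    (h : ∀ k, (f k).PosSemidef) : (∑ k, f k).PosSemidef := by
  classical
  refine Finset.sum_induction f Matrix.PosSemidef (fun a b ha hb => ha.add hb)
    Matrix.PosSemidef.zero (fun k _ => h k)

/-- Lemma 3.1, estimate (3.7) for the preconditioner matrix `A₂`, case `d = 2`:
for symmetric positive semidefinite `A_{ℓ,k}` and diagonal `D_{ℓ,k}` with
`(1−q_D)·d⁰_{ℓ,k}•I ≼ D_{ℓ,k} ≼ (1+q_D)·d⁰_{ℓ,k}•I`, the matrices
`A = Σ_k (A_{1,k}⊗D_{2,k} + D_{1,k}⊗A_{2,k})` and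
`A₂ = Σ_k (d⁰_{2,k}•(A_{1,k}⊗I) + d⁰_{1,k}•(I⊗A_{2,k}))` satisfy
`(1−q_D)•A₂ ≼ A ≼ (1+q_D)•A₂` in the Loewner order. -/
theorem stmt_6 {R n : ℕ} (hR : 0 < R) (hn : 0 < n)
    (qD : ℝ) (hq0 : 0 ≤ qD) (hq1 : qD < 1)
    (A1 A2 D1 D2 : Fin R → Matrix (Fin n) (Fin n) ℝ)
    (d1 d2 : Fin R → ℝ)
    (hA1 : ∀ k, (A1 k).PosSemidef) (hA2 : ∀ k, (A2 k).PosSemidef)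
    (hD1diag : ∀ k, (D1 k).IsDiag) (hD2diag : ∀ k, (D2 k).IsDiag)
    (hd1 : ∀ k, 0 < d1 k) (hd2 : ∀ k, 0 < d2 k)
    (hD1low : ∀ k, (D1 k - ((1 - qD) * d1 k) • (1 : Matrix (Fin n) (Fin n) ℝ)).PosSemidef)
    (hD1up : ∀ k, (((1 + qD) * d1 k) • (1 : Matrix (Fin n) (Fin n) ℝ) - D1 k).PosSemidef)
    (hD2low : ∀ k, (D2 k - ((1 - qD) * d2 k) • (1 : Matrix (Fin n) (Fin n) ℝ)).PosSemidef)
    (hD2up : ∀ k, (((1 + qD) * d2 k) • (1 : Matrix (Fin n) (Fin n) ℝ) - D2 k).PosSemidef)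
    (A A₂ : Matrix (Fin n × Fin n) (Fin n × Fin n) ℝ)
    (hA : A = ∑ k, (A1 k ⊗ₖ D2 k + D1 k ⊗ₖ A2 k))
    (hA₂ : A₂ = ∑ k, (d2 k • (A1 k ⊗ₖ (1 : Matrix (Fin n) (Fin n) ℝ))
        + d1 k • ((1 : Matrix (Fin n) (Fin n) ℝ) ⊗ₖ A2 k))) :
    (A - (1 - qD) • A₂).PosSemidef ∧ ((1 + qD) • A₂ - A).PosSemidef := by
  subst hA hA₂
  constructor
  · rw [Finset.smul_sum, ← Finset.sum_sub_distrib]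
    apply psd_sum
    intro k
    have heq : (A1 k ⊗ₖ D2 k + D1 k ⊗ₖ A2 k)
        - (1 - qD) • (d2 k • (A1 k ⊗ₖ (1 : Matrix (Fin n) (Fin n) ℝ))
          + d1 k • ((1 : Matrix (Fin n) (Fin n) ℝ) ⊗ₖ A2 k))
        = A1 k ⊗ₖ (D2 k - ((1 - qD) * d2 k) • (1 : Matrix (Fin n) (Fin n) ℝ))
          + (D1 k - ((1 - qD) * d1 k) • (1 : Matrix (Fin n) (Fin n) ℝ)) ⊗ₖ A2 k := by
      rw [kron_sub_right, kron_sub_left, Matrix.kronecker_smul, Matrix.smul_kronecker,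
        smul_add, smul_smul, smul_smul]
      abel
    rw [heq]
    exact (psd_kron (hA1 k) (hD2low k)).add (psd_kron (hD1low k) (hA2 k))
  · rw [Finset.smul_sum, ← Finset.sum_sub_distrib]
    apply psd_sum
    intro k
    have heq : (1 + qD) • (d2 k • (A1 k ⊗ₖ (1 : Matrix (Fin n) (Fin n) ℝ))
          + d1 k • ((1 : Matrix (Fin n) (Fin n) ℝ) ⊗ₖ A2 k))
        - (A1 k ⊗ₖ D2 k + D1 k ⊗ₖ A2 k)
        = A1 k ⊗ₖ (((1 + qD) * d2 k) • (1 : Matrix (Fin n) (Fin n) ℝ) - D2 k)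
          + (((1 + qD) * d1 k) • (1 : Matrix (Fin n) (Fin n) ℝ) - D1 k) ⊗ₖ A2 k := by
      rw [kron_sub_right, kron_sub_left, Matrix.kronecker_smul, Matrix.smul_kronecker,
        smul_add, smul_smul, smul_smul]
      abel
    rw [heq]
    exact (psd_kron (hA1 k) (hD2up k)).add (psd_kron (hD1up k) (hA2 k))
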